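/- If T is a T(1,2,v) trade on a v-set X with v ≡ 3 (mod 4) of maximum volume, then its volume is (1/2)·binom(v,2) - 3/2, and the set of pairs of X not occurring in T forms a triangle: binom(X,2) \ (T⁺ ∪ T⁻) = {x₁x₂, x₁x₃, x₂x₃} for some three points x₁, x₂, x₃ ∈ X. -/

import Mathlib

/-!  Auxiliary development for STATEMENT 17.  A maximum-volume T(1,2,v) trade
with v ≡ 3 (mod 4).  We construct, by induction in steps of 4, a trade on
`range (4k+3)` covering everything except a fixed triangle, transport it to
the abstract vertex type, and combine it with parity arguments. -/

open Finset

lemma pair_eq_pair_iff' {α : Type*} [DecidableEq α] {a b c d : α} :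
    ({a, b} : Finset α) = {c, d} ↔ (a = c ∧ b = d) ∨ (a = d ∧ b = c) := by
  rw [← Finset.coe_inj]; push_cast; exact Set.pair_eq_pair_iff

def Pnew (k : ℕ) : Finset (Finset ℕ) :=
  ((range (2*k+1)).image fun x => {x, 4*k+3}) ∪ ((range (2*k+1)).image fun x => {x, 4*k+4}) ∪
  ((Ico (2*k+1) (4*k+2)).image fun x => {x, 4*k+5}) ∪ ((Ico (2*k+1) (4*k+2)).image fun x => {x, 4*k+6}) ∪
  {{4*k+2, 4*k+3}, {4*k+2, 4*k+5}, {4*k+3, 4*k+4}, {4*k+4, 4*k+6}, {4*k+5, 4*k+6}}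

def Mnew (k : ℕ) : Finset (Finset ℕ) :=
  ((range (2*k+1)).image fun x => {x, 4*k+5}) ∪ ((range (2*k+1)).image fun x => {x, 4*k+6}) ∪
  ((Ico (2*k+1) (4*k+2)).image fun x => {x, 4*k+3}) ∪ ((Ico (2*k+1) (4*k+2)).image fun x => {x, 4*k+4}) ∪
  {{4*k+2, 4*k+4}, {4*k+2, 4*k+6}, {4*k+3, 4*k+5}, {4*k+3, 4*k+6}, {4*k+4, 4*k+5}}

lemma filtIm (s : Finset ℕ) (w x : ℕ) :
    ((s.image fun y => ({y, w} : Finset ℕ)).filter (fun e => x ∈ e)) =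
      if x = w then s.image (fun y => ({y, w} : Finset ℕ))
      else if x ∈ s then {{x, w}} else ∅ := by
  rw [Finset.filter_image]
  split_ifs with h1 h2
  · subst h1
    rw [Finset.filter_true_of_mem (fun y _ => by simp)]
  · rw [show s.filter (fun y => x ∈ ({y, w} : Finset ℕ)) = {x} from ?_]
    · simp
    ext y
    simp only [mem_filter, mem_insert, mem_singleton]
    constructor
    · rintro ⟨hy, h | h⟩
      · exact h.symm
      · exact absurd h h1
    · rintro rfl
      exact ⟨h2, Or.inl rfl⟩
  · rw [show s.filter (fun y => x ∈ ({y, w} : Finset ℕ)) = ∅ from ?_]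
    · simp
    rw [Finset.filter_eq_empty_iff]
    intro y hy
    simp only [mem_insert, mem_singleton]
    rintro (rfl | rfl)
    · exact h2 hy
    · exact h1 rfl

lemma card_im (s : Finset ℕ) (w : ℕ) (h : ∀ y ∈ s, y ≠ w) :
    ((s.image fun y => ({y, w} : Finset ℕ))).card = s.card := by
  rw [Finset.card_image_of_injOn]
  intro a ha b hb hab
  rw [pair_eq_pair_iff'] at hab
  rcases hab with ⟨h1, _⟩ | ⟨h1, h2⟩
  · exact h1
  · exact absurd h1 (h a ha)

lemma new_shape (k : ℕ) : ∀ e ∈ Pnew k ∪ Mnew k,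
    ∃ u v, u < v ∧ 4*k+3 ≤ v ∧ v < 4*k+7 ∧ e = {u, v} := by
  intro e he
  simp only [Pnew, Mnew, mem_union, mem_image, mem_range, mem_Ico, mem_insert,
    mem_singleton] at he
  rcases he with (((((⟨x,hx,rfl⟩|⟨x,hx,rfl⟩)|⟨x,hx,rfl⟩)|⟨x,hx,rfl⟩)|(rfl|rfl|rfl|rfl|rfl))|
    ((((⟨x,hx,rfl⟩|⟨x,hx,rfl⟩)|⟨x,hx,rfl⟩)|⟨x,hx,rfl⟩)|(rfl|rfl|rfl|rfl|rfl))) <;>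
    exact ⟨_, _, by omega, by omega, by omega, rfl⟩

set_option maxHeartbeats 2000000 in
lemma key_bal (k x : ℕ) :
    ((Pnew k).filter (fun e => x ∈ e)).card = ((Mnew k).filter (fun e => x ∈ e)).card := by
  rcases (by omega : x < 2*k+1 ∨ (2*k+1 ≤ x ∧ x < 4*k+2) ∨ x = 4*k+2 ∨ x = 4*k+3 ∨
    x = 4*k+4 ∨ x = 4*k+5 ∨ x = 4*k+6 ∨ 4*k+7 ≤ x) with
    h | ⟨h, h'⟩ | rfl | rfl | rfl | rfl | rfl | h
  · -- x < 2k+1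
    have h2 : ¬ x = 4*k+2 := by omega
    have h3 : ¬ x = 4*k+3 := by omega
    have h4 : ¬ x = 4*k+4 := by omega
    have h5 : ¬ x = 4*k+5 := by omega
    have h6 : ¬ x = 4*k+6 := by omega
    have h7 : ¬ 2*k+1 ≤ x := by omega
    simp [Pnew, Mnew, filter_union, filtIm, filter_insert, filter_singleton,
      h, h2, h3, h4, h5, h6, h7]
    have hne1 : ({x, 4*k+3} : Finset ℕ) ∉ ({{x, 4*k+4}} : Finset (Finset ℕ)) := by
      simp [pair_eq_pair_iff']; omega
    have hne2 : ({x, 4*k+5} : Finset ℕ) ∉ ({{x, 4*k+6}} : Finset (Finset ℕ)) := by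
      simp [pair_eq_pair_iff']; omega
    rw [card_insert_of_notMem hne1,
      card_insert_of_notMem hne2]
    rfl
  · -- 2k+1 ≤ x < 4k+2
    have h2 : ¬ x = 4*k+2 := by omega
    have h3 : ¬ x = 4*k+3 := by omega
    have h4 : ¬ x = 4*k+4 := by omega
    have h5 : ¬ x = 4*k+5 := by omega
    have h6 : ¬ x = 4*k+6 := by omega
    have h7 : ¬ x < 2*k+1 := by omega
    simp [Pnew, Mnew, filter_union, filtIm, filter_insert, filter_singleton,
      h, h', h2, h3, h4, h5, h6, h7]
    have hne1 : ({x, 4*k+5} : Finset ℕ) ∉ ({{x, 4*k+6}} : Finset (Finset ℕ)) := by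
      simp [pair_eq_pair_iff']; omega
    have hne2 : ({x, 4*k+3} : Finset ℕ) ∉ ({{x, 4*k+4}} : Finset (Finset ℕ)) := by
      simp [pair_eq_pair_iff']; omega
    rw [card_insert_of_notMem hne1,
      card_insert_of_notMem hne2]
    rfl
  · -- x = 4k+2
    have h2 : ¬ (4*k+2 = 4*k+3) := by omega
    have h3 : ¬ (4*k+2 = 4*k+4) := by omega
    have h4 : ¬ (4*k+2 = 4*k+5) := by omega
    have h5 : ¬ (4*k+2 = 4*k+6) := by omega
    have h6 : ¬ (4*k+2 < 2*k+1) := by omega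
    have h7 : ¬ (4*k+2 < 4*k+2) := by omega
    have h9 : 2*k+1 ≤ 4*k+2 := by omega
    simp [Pnew, Mnew, filter_union, filtIm, filter_insert, filter_singleton,
      h2, h3, h4, h5, h6, h7, h9]
    have hne1 : ({4*k+2, 4*k+3} : Finset ℕ) ∉ ({{4*k+2, 4*k+5}} : Finset (Finset ℕ)) := by
      simp [pair_eq_pair_iff']
    have hne2 : ({4*k+2, 4*k+4} : Finset ℕ) ∉ ({{4*k+2, 4*k+6}} : Finset (Finset ℕ)) := by
      simp [pair_eq_pair_iff']
    rw [card_insert_of_notMem hne1, card_insert_of_notMem hne2]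
    rfl
  · -- x = 4k+3
    have h2 : ¬ (4*k+3 = 4*k+4) := by omega
    have h3 : ¬ (4*k+3 = 4*k+5) := by omega
    have h4 : ¬ (4*k+3 = 4*k+6) := by omega
    have h5 : ¬ (4*k+3 = 4*k+2) := by omega
    have h6 : ¬ (4*k+3 < 2*k+1) := by omega
    have h7 : ¬ (4*k+3 < 4*k+2) := by omega
    have h9 : 2*k+1 ≤ 4*k+3 := by omega
    simp [Pnew, Mnew, filter_union, filtIm, filter_insert, filter_singleton,
      h2, h3, h4, h5, h6, h7, h9]
    have ha1 : ({4*k+2, 4*k+3} : Finset ℕ) ∉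
        insert ({4*k+3, 4*k+4} : Finset ℕ)
          ((range (2*k+1)).image fun y => ({y, 4*k+3} : Finset ℕ)) := by
      intro hmem
      simp only [mem_insert, mem_image, mem_range, pair_eq_pair_iff'] at hmem
      rcases hmem with hh | ⟨y, hy, hh⟩ <;> omega
    have ha2 : ({4*k+3, 4*k+4} : Finset ℕ) ∉
        ((range (2*k+1)).image fun y => ({y, 4*k+3} : Finset ℕ)) := by
      intro hmem
      simp only [mem_image, mem_range, pair_eq_pair_iff'] at hmem
      obtain ⟨y, hy, hh⟩ := hmem
      omega
    have hb1 : ({4*k+3, 4*k+5} : Finset ℕ) ∉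
        insert ({4*k+3, 4*k+6} : Finset ℕ)
          ((Ico (2*k+1) (4*k+2)).image fun y => ({y, 4*k+3} : Finset ℕ)) := by
      intro hmem
      simp only [mem_insert, mem_image, mem_Ico, pair_eq_pair_iff'] at hmem
      rcases hmem with hh | ⟨y, hy, hh⟩ <;> omega
    have hb2 : ({4*k+3, 4*k+6} : Finset ℕ) ∉
        ((Ico (2*k+1) (4*k+2)).image fun y => ({y, 4*k+3} : Finset ℕ)) := by
      intro hmem
      simp only [mem_image, mem_Ico, pair_eq_pair_iff'] at hmem
      obtain ⟨y, hy, hh⟩ := hmem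
      omega
    rw [card_insert_of_notMem ha1, card_insert_of_notMem ha2,
      card_insert_of_notMem hb1, card_insert_of_notMem hb2,
      card_im _ _ (fun y hy => by simp only [mem_range] at hy; omega),
      card_im _ _ (fun y hy => by simp only [mem_Ico] at hy; omega),
      card_range, Nat.card_Ico]
    omega
  · -- x = 4k+4
    have h2 : ¬ (4*k+4 = 4*k+3) := by omega
    have h3 : ¬ (4*k+4 = 4*k+5) := by omega
    have h4 : ¬ (4*k+4 = 4*k+6) := by omega
    have h5 : ¬ (4*k+4 = 4*k+2) := by omega
    have h6 : ¬ (4*k+4 < 2*k+1) := by omega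
    have h7 : ¬ (4*k+4 < 4*k+2) := by omega
    have h9 : 2*k+1 ≤ 4*k+4 := by omega
    simp [Pnew, Mnew, filter_union, filtIm, filter_insert, filter_singleton,
      h2, h3, h4, h5, h6, h7, h9]
    have ha1 : ({4*k+3, 4*k+4} : Finset ℕ) ∉
        insert ({4*k+4, 4*k+6} : Finset ℕ)
          ((range (2*k+1)).image fun y => ({y, 4*k+4} : Finset ℕ)) := by
      intro hmem
      simp only [mem_insert, mem_image, mem_range, pair_eq_pair_iff'] at hmem
      rcases hmem with hh | ⟨y, hy, hh⟩ <;> omega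
    have ha2 : ({4*k+4, 4*k+6} : Finset ℕ) ∉
        ((range (2*k+1)).image fun y => ({y, 4*k+4} : Finset ℕ)) := by
      intro hmem
      simp only [mem_image, mem_range, pair_eq_pair_iff'] at hmem
      obtain ⟨y, hy, hh⟩ := hmem
      omega
    have hb1 : ({4*k+2, 4*k+4} : Finset ℕ) ∉
        ((Ico (2*k+1) (4*k+2)).image fun y => ({y, 4*k+4} : Finset ℕ)) ∪
          ({{4*k+4, 4*k+5}} : Finset (Finset ℕ)) := by
      intro hmem
      simp only [mem_union, mem_image, mem_Ico, mem_singleton, pair_eq_pair_iff'] at hmem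
      rcases hmem with ⟨y, hy, hh⟩ | hh <;> omega
    have hd : Disjoint ((Ico (2*k+1) (4*k+2)).image fun y => ({y, 4*k+4} : Finset ℕ))
        ({{4*k+4, 4*k+5}} : Finset (Finset ℕ)) := by
      rw [Finset.disjoint_singleton_right]
      intro hmem
      simp only [mem_image, mem_Ico, pair_eq_pair_iff'] at hmem
      obtain ⟨y, hy, hh⟩ := hmem
      omega
    rw [← Finset.union_singleton ({4*k+4, 4*k+5} : Finset ℕ), card_insert_of_notMem ha1, card_insert_of_notMem ha2,
      card_insert_of_notMem hb1, card_union_of_disjoint hd,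
      card_im _ _ (fun y hy => by simp only [mem_range] at hy; omega),
      card_im _ _ (fun y hy => by simp only [mem_Ico] at hy; omega),
      card_range, Nat.card_Ico]
    simp only [card_singleton]
    omega
  · -- x = 4k+5
    have h2 : ¬ (4*k+5 = 4*k+3) := by omega
    have h3 : ¬ (4*k+5 = 4*k+4) := by omega
    have h4 : ¬ (4*k+5 = 4*k+6) := by omega
    have h5 : ¬ (4*k+5 = 4*k+2) := by omega
    have h6 : ¬ (4*k+5 < 2*k+1) := by omega
    have h7 : ¬ (4*k+5 < 4*k+2) := by omega
    have h9 : 2*k+1 ≤ 4*k+5 := by omega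
    simp [Pnew, Mnew, filter_union, filtIm, filter_insert, filter_singleton,
      h2, h3, h4, h5, h6, h7, h9]
    have ha1 : ({4*k+2, 4*k+5} : Finset ℕ) ∉
        ((Ico (2*k+1) (4*k+2)).image fun y => ({y, 4*k+5} : Finset ℕ)) ∪
          ({{4*k+5, 4*k+6}} : Finset (Finset ℕ)) := by
      intro hmem
      simp only [mem_union, mem_image, mem_Ico, mem_singleton, pair_eq_pair_iff'] at hmem
      rcases hmem with ⟨y, hy, hh⟩ | hh <;> omega
    have hd1 : Disjoint ((Ico (2*k+1) (4*k+2)).image fun y => ({y, 4*k+5} : Finset ℕ))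
        ({{4*k+5, 4*k+6}} : Finset (Finset ℕ)) := by
      rw [Finset.disjoint_singleton_right]
      intro hmem
      simp only [mem_image, mem_Ico, pair_eq_pair_iff'] at hmem
      obtain ⟨y, hy, hh⟩ := hmem
      omega
    have hb1 : ({4*k+3, 4*k+5} : Finset ℕ) ∉
        ((range (2*k+1)).image fun y => ({y, 4*k+5} : Finset ℕ)) ∪
          ({{4*k+4, 4*k+5}} : Finset (Finset ℕ)) := by
      intro hmem
      simp only [mem_union, mem_image, mem_range, mem_singleton, pair_eq_pair_iff'] at hmem
      rcases hmem with ⟨y, hy, hh⟩ | hh <;> omega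
    have hd2 : Disjoint ((range (2*k+1)).image fun y => ({y, 4*k+5} : Finset ℕ))
        ({{4*k+4, 4*k+5}} : Finset (Finset ℕ)) := by
      rw [Finset.disjoint_singleton_right]
      intro hmem
      simp only [mem_image, mem_range, pair_eq_pair_iff'] at hmem
      obtain ⟨y, hy, hh⟩ := hmem
      omega
    rw [← Finset.union_singleton ({4*k+5, 4*k+6} : Finset ℕ), ← Finset.union_singleton ({4*k+4, 4*k+5} : Finset ℕ), card_insert_of_notMem ha1, card_union_of_disjoint hd1,
      card_insert_of_notMem hb1, card_union_of_disjoint hd2,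
      card_im _ _ (fun y hy => by simp only [mem_Ico] at hy; omega),
      card_im _ _ (fun y hy => by simp only [mem_range] at hy; omega),
      card_range, Nat.card_Ico]
    simp only [card_singleton]
    omega
  · -- x = 4k+6
    have h2 : ¬ (4*k+6 = 4*k+3) := by omega
    have h3 : ¬ (4*k+6 = 4*k+4) := by omega
    have h4 : ¬ (4*k+6 = 4*k+5) := by omega
    have h5 : ¬ (4*k+6 = 4*k+2) := by omega
    have h6 : ¬ (4*k+6 < 2*k+1) := by omega
    have h7 : ¬ (4*k+6 < 4*k+2) := by omega
    have h9 : 2*k+1 ≤ 4*k+6 := by omega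
    simp [Pnew, Mnew, filter_union, filtIm, filter_insert, filter_singleton,
      h2, h3, h4, h5, h6, h7, h9]
    have ha1 : ({4*k+4, 4*k+6} : Finset ℕ) ∉
        ((Ico (2*k+1) (4*k+2)).image fun y => ({y, 4*k+6} : Finset ℕ)) ∪
          ({{4*k+5, 4*k+6}} : Finset (Finset ℕ)) := by
      intro hmem
      simp only [mem_union, mem_image, mem_Ico, mem_singleton, pair_eq_pair_iff'] at hmem
      rcases hmem with ⟨y, hy, hh⟩ | hh <;> omega
    have hd1 : Disjoint ((Ico (2*k+1) (4*k+2)).image fun y => ({y, 4*k+6} : Finset ℕ))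
        ({{4*k+5, 4*k+6}} : Finset (Finset ℕ)) := by
      rw [Finset.disjoint_singleton_right]
      intro hmem
      simp only [mem_image, mem_Ico, pair_eq_pair_iff'] at hmem
      obtain ⟨y, hy, hh⟩ := hmem
      omega
    have hb1 : ({4*k+2, 4*k+6} : Finset ℕ) ∉
        insert ({4*k+3, 4*k+6} : Finset ℕ)
          ((range (2*k+1)).image fun y => ({y, 4*k+6} : Finset ℕ)) := by
      intro hmem
      simp only [mem_insert, mem_image, mem_range, pair_eq_pair_iff'] at hmem
      rcases hmem with hh | ⟨y, hy, hh⟩ <;> omega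
    have hb2 : ({4*k+3, 4*k+6} : Finset ℕ) ∉
        ((range (2*k+1)).image fun y => ({y, 4*k+6} : Finset ℕ)) := by
      intro hmem
      simp only [mem_image, mem_range, pair_eq_pair_iff'] at hmem
      obtain ⟨y, hy, hh⟩ := hmem
      omega
    rw [← Finset.union_singleton ({4*k+5, 4*k+6} : Finset ℕ), card_insert_of_notMem ha1, card_union_of_disjoint hd1,
      card_insert_of_notMem hb1, card_insert_of_notMem hb2,
      card_im _ _ (fun y hy => by simp only [mem_Ico] at hy; omega),
      card_im _ _ (fun y hy => by simp only [mem_range] at hy; omega),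
      card_range, Nat.card_Ico]
    simp only [card_singleton]
    omega
  · -- x ≥ 4k+7
    rw [Finset.filter_false_of_mem, Finset.filter_false_of_mem]
    · intro e he
      obtain ⟨u, v, h1, h2, h3, rfl⟩ := new_shape k e (mem_union_right _ he)
      simp only [mem_insert, mem_singleton]
      omega
    · intro e he
      obtain ⟨u, v, h1, h2, h3, rfl⟩ := new_shape k e (mem_union_left _ he)
      simp only [mem_insert, mem_singleton]
      omega

lemma pair_sup {u v : ℕ} (h : u < v) : ({u, v} : Finset ℕ).sup id = v := by
  simp only [Finset.sup_insert, Finset.sup_singleton, id]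
  omega

lemma pair_sum {u v : ℕ} (h : u < v) : ({u, v} : Finset ℕ).sum id = u + v := by
  rw [Finset.sum_pair (by omega : u ≠ v)]; rfl

/-- color tag used to separate Pnew from Mnew -/
def ctag (k : ℕ) (e : Finset ℕ) : Prop :=
  let v := e.sup id
  let u := e.sum id - v
  (u < 2*k+1 ∧ (v = 4*k+3 ∨ v = 4*k+4)) ∨
  (2*k+1 ≤ u ∧ u < 4*k+2 ∧ (v = 4*k+5 ∨ v = 4*k+6)) ∨
  (u = 4*k+2 ∧ (v = 4*k+3 ∨ v = 4*k+5)) ∨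
  (u = 4*k+3 ∧ v = 4*k+4) ∨ (u = 4*k+4 ∧ v = 4*k+6) ∨ (u = 4*k+5 ∧ v = 4*k+6)

lemma ctag_P (k : ℕ) : ∀ e ∈ Pnew k, ctag k e := by
  intro e he
  simp only [Pnew, mem_union, mem_image, mem_range, mem_Ico, mem_insert, mem_singleton] at he
  rcases he with ((((⟨x,hx,rfl⟩|⟨x,hx,rfl⟩)|⟨x,hx,rfl⟩)|⟨x,hx,rfl⟩)|(rfl|rfl|rfl|rfl|rfl)) <;>
    · rw [ctag]
      rw [pair_sup (by omega), pair_sum (by omega)]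
      omega

lemma ctag_M (k : ℕ) : ∀ e ∈ Mnew k, ¬ ctag k e := by
  intro e he
  simp only [Mnew, mem_union, mem_image, mem_range, mem_Ico, mem_insert, mem_singleton] at he
  rcases he with ((((⟨x,hx,rfl⟩|⟨x,hx,rfl⟩)|⟨x,hx,rfl⟩)|⟨x,hx,rfl⟩)|(rfl|rfl|rfl|rfl|rfl)) <;>
    · rw [ctag]
      rw [pair_sup (by omega), pair_sum (by omega)]
      omega

lemma disj_PM (k : ℕ) : Disjoint (Pnew k) (Mnew k) :=
  Finset.disjoint_left.2 fun {e} hp hm => (ctag_M k e hm) (ctag_P k e hp)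

lemma union_PM (k : ℕ) : Pnew k ∪ Mnew k =
    (range (4*k+7)).powersetCard 2 \ (range (4*k+3)).powersetCard 2 := by
  ext e
  constructor
  · intro he
    obtain ⟨u, v, huv, hv1, hv2, rfl⟩ := new_shape k e he
    simp only [mem_sdiff, Finset.mem_powersetCard, not_and]
    refine ⟨⟨?_, Finset.card_pair (by omega)⟩, ?_⟩
    · intro y hy
      simp only [mem_insert, mem_singleton] at hy
      simp only [mem_range]
      omega
    · intro hsub
      exact absurd (by simpa using hsub (by simp : v ∈ ({u,v} : Finset ℕ)) : v < 4*k+3)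
        (by omega)
  · intro he
    simp only [mem_sdiff, Finset.mem_powersetCard, not_and] at he
    obtain ⟨⟨hsub, hc⟩, hnot⟩ := he
    obtain ⟨u', v', hne, rfl⟩ := Finset.card_eq_two.1 hc
    -- order them
    obtain ⟨u, v, huv, hpe⟩ : ∃ u v, u < v ∧ ({u',v'} : Finset ℕ) = {u, v} := by
      rcases Nat.lt_or_ge u' v' with h | h
      · exact ⟨u', v', h, rfl⟩
      · exact ⟨v', u', by omega, Finset.pair_comm u' v'⟩
    rw [hpe] at hsub ⊢
    have hu : u < 4*k+7 := by simpa using hsub (by simp : u ∈ ({u,v} : Finset ℕ))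
    have hv : v < 4*k+7 := by simpa using hsub (by simp : v ∈ ({u,v} : Finset ℕ))
    have hvge : 4*k+3 ≤ v := by
      by_contra hlt
      rw [hpe] at hnot
      exact hnot (fun y hy => by
        simp only [mem_insert, mem_singleton] at hy
        simp only [mem_range]
        omega) (Finset.card_pair (by omega))
    clear hpe hnot hsub hc hne
    simp only [Pnew, Mnew, mem_union, mem_image, mem_range, mem_Ico, mem_insert, mem_singleton]
    by_cases hun : u < 4*k+3
    · -- bipartite edge
      have hv4 : v = 4*k+3 ∨ v = 4*k+4 ∨ v = 4*k+5 ∨ v = 4*k+6 := by omega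
      by_cases h1 : u < 2*k+1
      · rcases hv4 with rfl | rfl | rfl | rfl
        · exact Or.inl (Or.inl (Or.inl (Or.inl (Or.inl ⟨u, h1, rfl⟩))))
        · exact Or.inl (Or.inl (Or.inl (Or.inl (Or.inr ⟨u, h1, rfl⟩))))
        · exact Or.inr (Or.inl (Or.inl (Or.inl (Or.inl ⟨u, h1, rfl⟩))))
        · exact Or.inr (Or.inl (Or.inl (Or.inl (Or.inr ⟨u, h1, rfl⟩))))
      · by_cases h2 : u < 4*k+2
        · rcases hv4 with rfl | rfl | rfl | rfl
          · exact Or.inr (Or.inl (Or.inl (Or.inr ⟨u, by omega, rfl⟩)))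
          · exact Or.inr (Or.inl (Or.inr ⟨u, by omega, rfl⟩))
          · exact Or.inl (Or.inl (Or.inl (Or.inr ⟨u, by omega, rfl⟩)))
          · exact Or.inl (Or.inl (Or.inr ⟨u, by omega, rfl⟩))
        · -- u = 4k+2
          have hu2 : u = 4*k+2 := by omega
          subst hu2
          rcases hv4 with rfl | rfl | rfl | rfl
          · exact Or.inl (Or.inr (Or.inl rfl))
          · exact Or.inr (Or.inr (Or.inl rfl))
          · exact Or.inl (Or.inr (Or.inr (Or.inl rfl)))
          · exact Or.inr (Or.inr (Or.inr (Or.inl rfl)))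
    · -- K4 edge
      have : (u = 4*k+3 ∧ v = 4*k+4) ∨ (u = 4*k+3 ∧ v = 4*k+5) ∨ (u = 4*k+3 ∧ v = 4*k+6) ∨
             (u = 4*k+4 ∧ v = 4*k+5) ∨ (u = 4*k+4 ∧ v = 4*k+6) ∨ (u = 4*k+5 ∧ v = 4*k+6) := by
        omega
      rcases this with ⟨rfl,rfl⟩|⟨rfl,rfl⟩|⟨rfl,rfl⟩|⟨rfl,rfl⟩|⟨rfl,rfl⟩|⟨rfl,rfl⟩
      · exact Or.inl (Or.inr (Or.inr (Or.inr (Or.inl rfl))))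
      · exact Or.inr (Or.inr (Or.inr (Or.inr (Or.inl rfl))))
      · exact Or.inr (Or.inr (Or.inr (Or.inr (Or.inr (Or.inl rfl)))))
      · exact Or.inr (Or.inr (Or.inr (Or.inr (Or.inr (Or.inr rfl)))))
      · exact Or.inl (Or.inr (Or.inr (Or.inr (Or.inr (Or.inl rfl)))))
      · exact Or.inl (Or.inr (Or.inr (Or.inr (Or.inr (Or.inr rfl)))))


lemma exists_trade (k : ℕ) : ∃ Tp Tm : Finset (Finset ℕ),
    Disjoint Tp Tm ∧
    Tp ∪ Tm = (Finset.range (4*k+3)).powersetCard 2 \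
      ({{0,1},{0,2},{1,2}} : Finset (Finset ℕ)) ∧
    ∀ x : ℕ, (Tp.filter (fun e => x ∈ e)).card = (Tm.filter (fun e => x ∈ e)).card := by
  induction k with
  | zero =>
    refine ⟨∅, ∅, disjoint_empty_left _, ?_, fun x => rfl⟩
    decide
  | succ k ih =>
    obtain ⟨Tp, Tm, hdis, huni, hbal⟩ := ih
    have hold : ∀ e ∈ Tp ∪ Tm, e ⊆ range (4*k+3) := by
      intro e he
      have := huni ▸ he
      rw [mem_sdiff, Finset.mem_powersetCard] at this
      exact this.1.1
    have holdnew : ∀ e, e ∈ Tp ∪ Tm → e ∈ Pnew k ∪ Mnew k → False := by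
      intro e he hf
      obtain ⟨u, v, huv, hv1, hv2, rfl⟩ := new_shape k e hf
      have := hold _ he (by simp : v ∈ ({u, v} : Finset ℕ))
      rw [mem_range] at this
      omega
    refine ⟨Tp ∪ Pnew k, Tm ∪ Mnew k, ?_, ?_, ?_⟩
    · -- disjointness
      rw [Finset.disjoint_union_left, Finset.disjoint_union_right,
        Finset.disjoint_union_right]
      refine ⟨⟨hdis, ?_⟩, ?_, disj_PM k⟩
      · rw [Finset.disjoint_left]
        intro e he hf
        exact holdnew e (mem_union_left _ he) (mem_union_right _ hf)
      · rw [Finset.disjoint_right]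
        intro e he hf
        exact holdnew e (mem_union_right _ he) (mem_union_left _ hf)
    · -- union identity
      have harr : 4*(k+1)+3 = 4*k+7 := by ring
      rw [harr]
      have : Tp ∪ Pnew k ∪ (Tm ∪ Mnew k) = (Tp ∪ Tm) ∪ (Pnew k ∪ Mnew k) := by
        ext e
        simp only [mem_union]
        tauto
      rw [this, huni, union_PM k]
      ext e
      simp only [mem_union, mem_sdiff, Finset.mem_powersetCard]
      have htri : e ∈ ({{0,1},{0,2},{1,2}} : Finset (Finset ℕ)) → e ⊆ range (4*k+3) := by
        intro he
        simp only [mem_insert, mem_singleton] at he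
        rcases he with rfl | rfl | rfl <;>
          · intro y hy
            simp only [mem_insert, mem_singleton] at hy
            rw [mem_range]
            omega
      have hmono : e ⊆ range (4*k+3) → e ⊆ range (4*k+7) := by
        intro h y hy
        have := h hy
        rw [mem_range] at *
        omega
      constructor
      · rintro (⟨⟨hs, hc⟩, ht⟩ | ⟨⟨hs, hc⟩, hns⟩)
        · exact ⟨⟨hmono hs, hc⟩, ht⟩
        · refine ⟨⟨hs, hc⟩, fun ht => hns ⟨htri ht, hc⟩⟩
      · rintro ⟨⟨hs, hc⟩, ht⟩
        by_cases hsn : e ⊆ range (4*k+3)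
        · exact Or.inl ⟨⟨hsn, hc⟩, ht⟩
        · exact Or.inr ⟨⟨hs, hc⟩, fun hmem => hsn hmem.1⟩
    · -- balance
      intro x
      rw [filter_union, filter_union,
        card_union_of_disjoint (Finset.disjoint_filter_filter ?_),
        card_union_of_disjoint (Finset.disjoint_filter_filter ?_)]
      · rw [hbal x, key_bal k x]
      · rw [Finset.disjoint_left]
        intro e he hf
        exact holdnew e (mem_union_right _ he) (mem_union_right _ hf)
      · rw [Finset.disjoint_left]
        intro e he hf
        exact holdnew e (mem_union_left _ he) (mem_union_left _ hf)

section TOPLEVEL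

lemma pair_eq_pair_iff'' {α : Type*} [DecidableEq α] {a b c d : α} :
    ({a, b} : Finset α) = {c, d} ↔ (a = c ∧ b = d) ∨ (a = d ∧ b = c) := by
  rw [← Finset.coe_inj]; push_cast; exact Set.pair_eq_pair_iff

lemma doublecount {α : Type*} [DecidableEq α] (s : Finset α) (t : Finset (Finset α))
    (h : ∀ e ∈ t, e ⊆ s) :
    ∑ x ∈ s, (t.filter (fun e => x ∈ e)).card = ∑ e ∈ t, e.card := by
  simp only [Finset.card_filter]
  rw [Finset.sum_comm]
  refine Finset.sum_congr rfl (fun e he => ?_)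
  rw [← Finset.card_filter, Finset.filter_mem_eq_inter, Finset.inter_eq_right.2 (h e he)]

lemma deg_pairs {V : Type*} [Fintype V] [DecidableEq V] (x : V) :
    ((Finset.univ.powersetCard 2 : Finset (Finset V)).filter (fun e => x ∈ e)).card
      = Fintype.card V - 1 := by
  have himg : (Finset.univ.powersetCard 2 : Finset (Finset V)).filter (fun e => x ∈ e) =
      (Finset.univ.erase x).image (fun y => ({x, y} : Finset V)) := by
    ext e
    simp only [mem_filter, Finset.mem_powersetCard, mem_image, mem_erase, mem_univ, true_and,
      and_true]
    constructor
    · rintro ⟨⟨_, hc⟩, hx⟩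
      obtain ⟨u, v, huv, rfl⟩ := Finset.card_eq_two.1 hc
      simp only [mem_insert, mem_singleton] at hx
      rcases hx with rfl | rfl
      · exact ⟨v, Ne.symm huv, rfl⟩
      · exact ⟨u, huv, Finset.pair_comm x u⟩
    · rintro ⟨y, hy, rfl⟩
      exact ⟨⟨subset_univ _, Finset.card_pair (Ne.symm hy)⟩, mem_insert_self _ _⟩
  rw [himg, Finset.card_image_of_injOn, card_erase_of_mem (mem_univ x), card_univ]
  intro a ha b hb h
  rw [pair_eq_pair_iff''] at h
  simp only [coe_erase, Set.mem_diff, Set.mem_singleton_iff] at ha hb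
  rcases h with ⟨_, h⟩ | ⟨h1, h2⟩
  · exact h
  · exact absurd h2 ha.2

lemma pairs_of_triple {α : Type*} [DecidableEq α] {x1 x2 x3 : α}
    (h12 : x1 ≠ x2) (h13 : x1 ≠ x3) (h23 : x2 ≠ x3) :
    ({x1, x2, x3} : Finset α).powersetCard 2 = {{x1, x2}, {x1, x3}, {x2, x3}} := by
  ext e
  simp only [Finset.mem_powersetCard, mem_insert, mem_singleton]
  constructor
  · rintro ⟨hsub, hc⟩
    obtain ⟨u, v, huv, rfl⟩ := Finset.card_eq_two.1 hc
    have hu : u = x1 ∨ u = x2 ∨ u = x3 := by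
      have := hsub (mem_insert_self u {v})
      simpa using this
    have hv : v = x1 ∨ v = x2 ∨ v = x3 := by
      have := hsub (by simp : v ∈ ({u, v} : Finset α))
      simpa using this
    rcases hu with rfl | rfl | rfl <;> rcases hv with rfl | rfl | rfl
    · exact absurd rfl huv
    · exact Or.inl rfl
    · exact Or.inr (Or.inl rfl)
    · exact Or.inl (Finset.pair_comm u v)
    · exact absurd rfl huv
    · exact Or.inr (Or.inr rfl)
    · exact Or.inr (Or.inl (Finset.pair_comm u v))
    · exact Or.inr (Or.inr (Finset.pair_comm u v))
    · exact absurd rfl huv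
  · rintro (rfl | rfl | rfl)
    · refine ⟨?_, Finset.card_pair h12⟩
      intro y hy
      simp only [mem_insert, mem_singleton] at hy ⊢
      tauto
    · refine ⟨?_, Finset.card_pair h13⟩
      intro y hy
      simp only [mem_insert, mem_singleton] at hy ⊢
      tauto
    · refine ⟨?_, Finset.card_pair h23⟩
      intro y hy
      simp only [mem_insert, mem_singleton] at hy ⊢
      tauto

/-- a maximum-volume T(1,2,v) trade with v ≡ 3 (mod 4) has volume
(1/2)C(v,2) - 3/2 (stated multiplied by 4), and the uncovered pairs form a triangle. -/
theorem max_T12_trade (V : Type*) [Fintype V] [DecidableEq V]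
    (hv : Fintype.card V % 4 = 3)
    (Tp Tm : Finset (Finset V))
    (hcard2 : ∀ e ∈ Tp ∪ Tm, e.card = 2)
    (hdisj : Disjoint Tp Tm) (hne : Tp.Nonempty)
    (hvol : Tp.card = Tm.card)
    (hbal : ∀ x : V, (Tp.filter (fun e => x ∈ e)).card = (Tm.filter (fun e => x ∈ e)).card)
    (hmax : ∀ Tp' Tm' : Finset (Finset V),
      (∀ e ∈ Tp' ∪ Tm', e.card = 2) → Disjoint Tp' Tm' → Tp'.Nonempty →
      Tp'.card = Tm'.card →
      (∀ x : V, (Tp'.filter (fun e => x ∈ e)).card = (Tm'.filter (fun e => x ∈ e)).card) →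
      Tp'.card ≤ Tp.card) :
    4 * Tp.card + 6 = Fintype.card V * (Fintype.card V - 1) ∧
    ∃ x₁ x₂ x₃ : V, x₁ ≠ x₂ ∧ x₁ ≠ x₃ ∧ x₂ ≠ x₃ ∧
      (Finset.univ.powersetCard 2 : Finset (Finset V)) \ (Tp ∪ Tm) =
        {{x₁, x₂}, {x₁, x₃}, {x₂, x₃}} := by
  classical
  obtain ⟨k, hk⟩ : ∃ k, Fintype.card V = 4*k+3 := ⟨Fintype.card V / 4, by omega⟩
  set t := (4*k+3) * (2*k+1) with ht
  have ht2 : (4*k+3) * (4*k+2) = 2 * t := by rw [ht]; ring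
  have hc2 : (4*k+3).choose 2 = t := by
    rw [Nat.choose_two_right, show 4*k+3-1 = 4*k+2 by omega, ht2]
    exact Nat.mul_div_cancel_left t (by norm_num)
  have htodd : t % 2 = 1 := by
    rw [ht, Nat.mul_mod, show (4*k+3) % 2 = 1 by omega, show (2*k+1) % 2 = 1 by omega]
  have ht3 : 3 ≤ t := by
    calc 3 = 3 * 1 := by norm_num
    _ ≤ (4*k+3) * (2*k+1) := Nat.mul_le_mul (by omega) (by omega)
  -- the constructed trade on ℕ
  obtain ⟨Tp0, Tm0, hd0, hu0, hb0⟩ := exists_trade k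
  have hsub0 : ∀ e ∈ Tp0 ∪ Tm0, e ⊆ range (4*k+3) ∧ e.card = 2 := by
    intro e he
    have := hu0 ▸ he
    rw [mem_sdiff, Finset.mem_powersetCard] at this
    exact this.1
  have hvol0 : Tp0.card = Tm0.card := by
    have h1 : ∑ x ∈ range (4*k+3), (Tp0.filter (fun e => x ∈ e)).card = 2 * Tp0.card := by
      rw [doublecount _ _ (fun e he => (hsub0 e (mem_union_left _ he)).1),
        Finset.sum_congr rfl (fun e he => (hsub0 e (mem_union_left _ he)).2),
        Finset.sum_const, smul_eq_mul]
      ring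
    have h2 : ∑ x ∈ range (4*k+3), (Tm0.filter (fun e => x ∈ e)).card = 2 * Tm0.card := by
      rw [doublecount _ _ (fun e he => (hsub0 e (mem_union_right _ he)).1),
        Finset.sum_congr rfl (fun e he => (hsub0 e (mem_union_right _ he)).2),
        Finset.sum_const, smul_eq_mul]
      ring
    have h3 : ∑ x ∈ range (4*k+3), (Tp0.filter (fun e => x ∈ e)).card
        = ∑ x ∈ range (4*k+3), (Tm0.filter (fun e => x ∈ e)).card :=
      Finset.sum_congr rfl (fun x _ => hb0 x)
    omega
  have hcardsum : Tp0.card + Tm0.card + 3 = t := by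
    have htri_sub : ({{0,1},{0,2},{1,2}} : Finset (Finset ℕ)) ⊆
        (range (4*k+3)).powersetCard 2 := by
      intro e he
      simp only [mem_insert, mem_singleton] at he
      rcases he with rfl | rfl | rfl <;>
        · rw [Finset.mem_powersetCard]
          refine ⟨?_, Finset.card_pair (by omega)⟩
          intro y hy
          simp only [mem_insert, mem_singleton] at hy
          rw [mem_range]
          omega
    have htri_card : ({{0,1},{0,2},{1,2}} : Finset (Finset ℕ)).card = 3 := by decide
    have hpcard : ((range (4*k+3)).powersetCard 2).card = t := by
      rw [Finset.card_powersetCard, Finset.card_range, hc2]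
    have hu := congrArg Finset.card hu0
    rw [Finset.card_sdiff_of_subset htri_sub, card_union_of_disjoint hd0, hpcard, htri_card] at hu
    omega
  -- facts about M
  have hsubV : Tp ∪ Tm ⊆ (Finset.univ.powersetCard 2 : Finset (Finset V)) :=
    fun e he => Finset.mem_powersetCard.2 ⟨subset_univ _, hcard2 e he⟩
  set M := (Finset.univ.powersetCard 2 : Finset (Finset V)) \ (Tp ∪ Tm) with hMdef
  have hPVcard : (Finset.univ.powersetCard 2 : Finset (Finset V)).card = t := by
    rw [Finset.card_powersetCard, card_univ, hk, hc2]
  have hMcard : M.card + (Tp.card + Tm.card) = t := by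
    have h1 : M.card = (Finset.univ.powersetCard 2 : Finset (Finset V)).card
        - (Tp ∪ Tm).card := Finset.card_sdiff_of_subset hsubV
    have h2 : (Tp ∪ Tm).card = Tp.card + Tm.card := card_union_of_disjoint hdisj
    have h3 := Finset.card_le_card hsubV
    omega
  have hMev : ∀ x : V, (M.filter (fun e => x ∈ e)).card % 2 = 0 := by
    intro x
    have hsplit : M.filter (fun e => x ∈ e) ∪ (Tp ∪ Tm).filter (fun e => x ∈ e)
        = (Finset.univ.powersetCard 2 : Finset (Finset V)).filter (fun e => x ∈ e) := by
      rw [← filter_union, hMdef, Finset.sdiff_union_of_subset hsubV]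
    have hdisjf : Disjoint (M.filter (fun e => x ∈ e)) ((Tp ∪ Tm).filter (fun e => x ∈ e)) :=
      Finset.disjoint_filter_filter Finset.sdiff_disjoint
    have hcards := congrArg Finset.card hsplit
    rw [card_union_of_disjoint hdisjf] at hcards
    have hdeg := deg_pairs (V := V) x
    have hTpTm : ((Tp ∪ Tm).filter (fun e => x ∈ e)).card
        = (Tp.filter (fun e => x ∈ e)).card + (Tm.filter (fun e => x ∈ e)).card := by
      rw [filter_union, card_union_of_disjoint (Finset.disjoint_filter_filter hdisj)]
    rw [hTpTm, ← hbal x] at hcards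
    omega
  have hM1 : M.card ≠ 1 := by
    intro h1
    obtain ⟨e, he⟩ := Finset.card_eq_one.1 h1
    have heM : e ∈ M := by rw [he]; exact mem_singleton_self e
    have hc : e.card = 2 := (Finset.mem_powersetCard.1 (mem_sdiff.1 heM).1).2
    obtain ⟨u, v, huv, rfl⟩ := Finset.card_eq_two.1 hc
    have hev := hMev u
    rw [he, filter_singleton, if_pos (mem_insert_self _ _)] at hev
    simp at hev
  -- the maximality bound
  have hbound : t ≤ 2 * Tp.card + 3 := by
    rcases Nat.eq_zero_or_pos k with rfl | hkpos
    · have htt : t = 3 := by rw [ht]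
      omega
    · -- transport the constructed trade to V
      obtain ⟨g, hgi, hgs⟩ : ∃ g : ℕ → V, (∀ i < 4*k+3, ∀ j < 4*k+3, g i = g j → i = j) ∧
          (∀ v : V, ∃ i < 4*k+3, g i = v) := by
        have hcard : Fintype.card (Fin (4*k+3)) = Fintype.card V := by simp [hk]
        set eqv := Fintype.equivOfCardEq hcard with heqv
        refine ⟨fun i => eqv ⟨i % (4*k+3), Nat.mod_lt _ (by omega)⟩, ?_, ?_⟩
        · intro i hi j hj h
          have h2 := eqv.injective h
          rw [Fin.mk.injEq, Nat.mod_eq_of_lt hi, Nat.mod_eq_of_lt hj] at h2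
          exact h2
        · intro v
          refine ⟨(eqv.symm v).1, (eqv.symm v).2, ?_⟩
          have hlt : (eqv.symm v).1 % (4*k+3) = (eqv.symm v).1 :=
            Nat.mod_eq_of_lt (eqv.symm v).2
          exact (congrArg eqv (Fin.ext hlt)).trans (Equiv.apply_symm_apply eqv v)
      have hTp0sub : ∀ E ∈ Tp0, E ⊆ range (4*k+3) :=
        fun E hE => (hsub0 E (mem_union_left _ hE)).1
      have hTm0sub : ∀ E ∈ Tm0, E ⊆ range (4*k+3) :=
        fun E hE => (hsub0 E (mem_union_right _ hE)).1
      have hgE : ∀ E, E ⊆ range (4*k+3) → ∀ i, i < 4*k+3 → (g i ∈ E.image g ↔ i ∈ E) := by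
        intro E hE i hi
        constructor
        · intro h
          obtain ⟨j, hj, hji⟩ := Finset.mem_image.1 h
          have hjlt : j < 4*k+3 := mem_range.1 (hE hj)
          rwa [hgi j hjlt i hi hji] at hj
        · intro h
          exact Finset.mem_image_of_mem g h
      have hkey : ∀ A, A ⊆ range (4*k+3) → ∀ B, B ⊆ range (4*k+3) →
          A.image g = B.image g → A ⊆ B := by
        intro A hA B hB h i hi
        have hilt := mem_range.1 (hA hi)
        exact (hgE B hB i hilt).1 (h ▸ Finset.mem_image_of_mem g hi)
      have hFinj : ∀ A, A ⊆ range (4*k+3) → ∀ B, B ⊆ range (4*k+3) →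
          A.image g = B.image g → A = B := fun A hA B hB h =>
        Finset.Subset.antisymm (hkey A hA B hB h) (hkey B hB A hA h.symm)
      have hgInjOn : ∀ E, E ⊆ range (4*k+3) → (E.image g).card = E.card := by
        intro E hE
        rw [Finset.card_image_of_injOn]
        intro a ha b hb h
        exact hgi a (mem_range.1 (hE ha)) b (mem_range.1 (hE hb)) h
      have hmax' := hmax (Tp0.image (fun E => E.image g)) (Tm0.image (fun E => E.image g))
        ?_ ?_ ?_ ?_ ?_
      · rw [Finset.card_image_of_injOn
          (fun A hA B hB h => hFinj A (hTp0sub A hA) B (hTp0sub B hB) h)] at hmax'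
        omega
      · -- cards are 2
        intro e he
        rw [← Finset.image_union] at he
        obtain ⟨E, hE, rfl⟩ := Finset.mem_image.1 he
        rw [hgInjOn E (hsub0 E hE).1]
        exact (hsub0 E hE).2
      · -- disjoint
        rw [Finset.disjoint_left]
        intro e he1 he2
        obtain ⟨E1, hE1, rfl⟩ := Finset.mem_image.1 he1
        obtain ⟨E2, hE2, heq⟩ := Finset.mem_image.1 he2
        have := hFinj E2 (hTm0sub E2 hE2) E1 (hTp0sub E1 hE1) heq
        exact Finset.disjoint_left.1 hd0 hE1 (this ▸ hE2)
      · -- nonempty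
        have h21 : 21 ≤ t := by
          calc (21 : ℕ) = 7 * 3 := by norm_num
          _ ≤ (4*k+3) * (2*k+1) := Nat.mul_le_mul (by omega) (by omega)
        have : 1 ≤ Tp0.card := by omega
        exact (Finset.card_pos.1 (by omega)).image _
      · -- volumes
        rw [Finset.card_image_of_injOn
          (fun A hA B hB h => hFinj A (hTp0sub A hA) B (hTp0sub B hB) h),
          Finset.card_image_of_injOn
          (fun A hA B hB h => hFinj A (hTm0sub A hA) B (hTm0sub B hB) h)]
        exact hvol0
      · -- balance
        intro x
        obtain ⟨i, hi, rfl⟩ := hgs x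
        have hfilt : ∀ (T : Finset (Finset ℕ)), (∀ E ∈ T, E ⊆ range (4*k+3)) →
            ((T.image (fun E => E.image g)).filter (fun e => g i ∈ e)) =
              (T.filter (fun E => i ∈ E)).image (fun E => E.image g) := by
          intro T hT
          rw [Finset.filter_image]
          congr 1
          exact Finset.filter_congr (fun E hE => by
            simpa using (hgE E (hT E hE) i hi))
        rw [hfilt Tp0 hTp0sub, hfilt Tm0 hTm0sub,
          Finset.card_image_of_injOn (fun A hA B hB h =>
            hFinj A (hTp0sub A (mem_filter.1 hA).1) B (hTp0sub B (mem_filter.1 hB).1) h),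
          Finset.card_image_of_injOn (fun A hA B hB h =>
            hFinj A (hTm0sub A (mem_filter.1 hA).1) B (hTm0sub B (mem_filter.1 hB).1) h)]
        exact hb0 i
  -- conclude M.card = 3
  have hTp1 : 1 ≤ Tp.card := Finset.card_pos.2 hne
  have hMc3 : M.card = 3 := by omega
  -- extract the triangle
  obtain ⟨e1, e2, e3, hne12, hne13, hne23, hMeq⟩ := Finset.card_eq_three.1 hMc3
  have hMsub : ∀ e ∈ M, e.card = 2 :=
    fun e he => (Finset.mem_powersetCard.1 (mem_sdiff.1 he).1).2
  have hUsub : ∀ e ∈ M, e ⊆ e1 ∪ e2 ∪ e3 := by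
    intro e he
    rw [hMeq] at he
    simp only [mem_insert, mem_singleton] at he
    rcases he with rfl | rfl | rfl
    · exact Finset.subset_union_left.trans Finset.subset_union_left
    · exact Finset.subset_union_right.trans Finset.subset_union_left
    · exact Finset.subset_union_right
  have he1M : e1 ∈ M := by rw [hMeq]; simp
  have he2M : e2 ∈ M := by rw [hMeq]; simp
  have he3M : e3 ∈ M := by rw [hMeq]; simp
  have hdeg2 : ∀ x ∈ e1 ∪ e2 ∪ e3, (M.filter (fun e => x ∈ e)).card = 2 := by
    intro x hx
    have hle : (M.filter (fun e => x ∈ e)).card ≤ 3 := by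
      calc (M.filter (fun e => x ∈ e)).card ≤ M.card := Finset.card_filter_le _ _
      _ = 3 := hMc3
    have hge : 1 ≤ (M.filter (fun e => x ∈ e)).card := by
      rw [Nat.one_le_iff_ne_zero, ← Nat.pos_iff_ne_zero, Finset.card_pos]
      rcases mem_union.1 hx with h | h
      · rcases mem_union.1 h with h' | h'
        · exact ⟨e1, mem_filter.2 ⟨he1M, h'⟩⟩
        · exact ⟨e2, mem_filter.2 ⟨he2M, h'⟩⟩
      · exact ⟨e3, mem_filter.2 ⟨he3M, h⟩⟩
    have := hMev x
    omega
  have hsum6 : ∑ e ∈ M, e.card = 6 := by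
    rw [hMeq, Finset.sum_insert (by simp [hne12, hne13]),
      Finset.sum_insert (by simp [hne23]), Finset.sum_singleton,
      hMsub e1 he1M, hMsub e2 he2M, hMsub e3 he3M]
    norm_num
  have hScard : (e1 ∪ e2 ∪ e3).card = 3 := by
    have hdc := doublecount (e1 ∪ e2 ∪ e3) M hUsub
    rw [Finset.sum_congr rfl hdeg2, Finset.sum_const, smul_eq_mul, hsum6] at hdc
    omega
  obtain ⟨x1, x2, x3, h12, h13, h23, hSeq⟩ := Finset.card_eq_three.1 hScard
  have hMfin : M = ({x1, x2, x3} : Finset V).powersetCard 2 := by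
    apply Finset.eq_of_subset_of_card_le
    · intro e he
      rw [Finset.mem_powersetCard]
      exact ⟨hSeq ▸ hUsub e he, hMsub e he⟩
    · rw [Finset.card_powersetCard, ← hSeq, hScard, hMc3]
      norm_num
  constructor
  · have hnn : Fintype.card V * (Fintype.card V - 1) = 2 * t := by
      rw [hk, show 4*k+3-1 = 4*k+2 by omega]
      exact ht2
    rw [hnn]
    omega
  · exact ⟨x1, x2, x3, h12, h13, h23, by rw [hMfin, pairs_of_triple h12 h13 h23]⟩

end TOPLEVEL
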